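/- arXiv:2409.07445 — 3 statements merged into one kernel-verified Lean document; each statement's English description precedes it below -/
import Mathlib

section
/- Let S be a nonempty set, 𝓕 an ultrafilter on S, and for each s ∈ S let 𝕄(U_s,τ_s) be a Moufang set with τ_s = μ_{e_s} for some e_s ∈ U_s^#. Set U := ∏_{s∈S} U_s/𝓕 and define τ on U^# by [(a_s)]τ := [(a_sτ_s)] for any representative (a_s) with a_s ≠ 0 for all s (this is well-defined). Then: (1) for all x = [(x_s)] ∈ U and a = [(a_s)] ∈ U with a_s ≠ 0 for all s, the Hua maps satisfy xh_a = [(x_sh_{a_s})]; in particular 𝕄(U,τ) is a Moufang set; (2) 𝕄(U,τ) is proper if and only if {s ∈ S : 𝕄(U_s,τ_s) is proper} ∈ 𝓕; (3) 𝕄(U,τ) is special if and only if {s ∈ S : 𝕄(U_s,τ_s) is special} ∈ 𝓕; (4) if every 𝕄(U_s,τ_s) is special and T_s ∈ End(U_s) lies in the centroid of 𝕄(U_s,τ_s) for every s, then the induced endomorphism [(T_s)] of U lies in the centroid of 𝕄(U,τ). -/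
namespace MoufangPaper

variable {U : Type*} [AddGroup U]

/-- The translation permutation `α_a` of `X = U ∪ {∞}`, where `∞ = none`. -/
def alpha (a : U) : Equiv.Perm (Option U) := Equiv.optionCongr (Equiv.addRight a)

/-- `U_∞ = {α_a : a ∈ U}`. -/
def Uinf (U : Type*) [AddGroup U] : Subgroup (Equiv.Perm (Option U)) :=
  Subgroup.closure (Set.range (alpha (U := U)))

/-- Apply a permutation of `X` to a point of `U` and read the value in `U`
(with junk value `0` if the result is `∞`). -/
def pval (g : Equiv.Perm (Option U)) (x : U) : U := (g (some x)).getD 0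

/-- The data of the construction `𝕄(U,τ)`: a permutation `τ` of `X = U ∪ {∞}`
interchanging `0` and `∞`. -/
structure MSData (U : Type*) [AddGroup U] where
  τ : Equiv.Perm (Option U)
  τ_zero : τ (some 0) = none
  τ_inf : τ none = some 0

namespace MSData

variable (M : MSData U)


/-- `μ_a = α_a · (α_{-aτ⁻¹})^τ · α_{-(-aτ⁻¹)τ}` (right-action products realised as
permutations acting on the left). -/
def μ (a : U) : Equiv.Perm (Option U) :=
  alpha (-(pval M.τ (-(pval M.τ⁻¹ a)))) * M.τ * alpha (-(pval M.τ⁻¹ a)) * M.τ⁻¹ * alpha a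

open Classical in
/-- The Hua map `h_a = τμ_a` restricted to `U`, with the convention `h_0 = 0`. -/
noncomputable def hua (a : U) (x : U) : U := if a = 0 then 0 else pval (M.μ a * M.τ) x

/-- `h_{a,b} := h_{a+b} − h_a − h_b`. -/
noncomputable def huab (a b x : U) : U := M.hua (a + b) x - M.hua a x - M.hua b x

/-- The family of root groups: `U_∞`, `U_0 := U_∞^τ`, `U_a := U_0^{α_a}`. -/
def Usub : Option U → Subgroup (Equiv.Perm (Option U))
  | none => Uinf U
  | some a =>
      ((Uinf U).map (MulAut.conj M.τ⁻¹).toMonoidHom).map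
        (MulAut.conj (alpha a)⁻¹).toMonoidHom

/-- `𝕄(U,τ)` is a Moufang set: condition (MS2) (condition (MS1) holds by construction). -/
def IsMoufangSet : Prop :=
  ∀ (y : Option U) (g : Equiv.Perm (Option U)), g ∈ M.Usub y →
    ∀ x : Option U, (M.Usub x).map (MulAut.conj g⁻¹).toMonoidHom = M.Usub (g x)

/-- `𝕄(U,τ)` is special: `(−a)τ = −(aτ)` for all `a ∈ U^#`. -/
def IsSpecial : Prop :=
  ∀ a : U, a ≠ 0 → M.τ (some (-a)) = (M.τ (some a)).map (fun u => -u)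

/-- The Hua subgroup `H = ⟨μ_aμ_b : a,b ∈ U^#⟩` (right-action products). -/
def HuaSubgroup : Subgroup (Equiv.Perm (Option U)) :=
  Subgroup.closure {g | ∃ a b : U, a ≠ 0 ∧ b ≠ 0 ∧ g = M.μ b * M.μ a}

/-- `T ∈ End_H(U)`: an additive endomorphism of `U` commuting with the Hua subgroup. -/
def IsEndH (T : U →+ U) : Prop :=
  ∀ g ∈ M.HuaSubgroup, ∀ x : U, T (pval g x) = pval g (T x)

/-- Membership in the centroid `𝒞 = {T ∈ End_H(U) : h_{aT} = T²h_a for all a ∈ U}`. -/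
def InCentroid (T : U →+ U) : Prop :=
  M.IsEndH T ∧ ∀ a x : U, M.hua (T a) x = T (T (M.hua a x))

/-- The little projective group `G† = ⟨U_x : x ∈ X⟩`. -/
def littleProjGroup : Subgroup (Equiv.Perm (Option U)) := ⨆ x : Option U, M.Usub x

/-- Powers with respect to the identity `e`: `a⁰ = e`, `a¹ = a`, `a^{n+2} = aⁿh_a`. -/
noncomputable def pow (e a : U) : ℕ → U
  | 0 => e
  | 1 => a
  | n + 2 => M.hua a (pow e a n)

/-- `a^{-1} := −(aτ)`. -/
def inv (a : U) : U := -(pval M.τ a)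

end MSData

/-- A subgroup of `Sym(X)` is sharply 2-transitive on `X`. -/
def IsSharply2Trans {X : Type*} (G : Subgroup (Equiv.Perm X)) : Prop :=
  ∀ x₁ x₂ y₁ y₂ : X, x₁ ≠ x₂ → y₁ ≠ y₂ →
    ∃! g : G, (g : Equiv.Perm X) x₁ = y₁ ∧ (g : Equiv.Perm X) x₂ = y₂

/-- The Moufang set `𝕄(U,τ)` is proper: its little projective group is not
sharply 2-transitive. -/
def MSData.IsProper (M : MSData U) : Prop := ¬ IsSharply2Trans M.littleProjGroup

/-- The polarisation `Q_{a,b}` of a quadratic-type map `Q`. -/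
def polar {V : Type*} [AddGroup V] (Q : V → V → V) (a b x : V) : V :=
  Q (a + b) x - Q a x - Q b x

/-- `(U, Q, e)` is a quadratic Jordan division algebra over `k`, where the `k`-vector
space structure of `U` is given by a ring embedding `φ : k →+* End(U)`. -/
structure IsQJDA {k : Type*} [Field k] {V : Type*} [AddCommGroup V]
    (φ : k →+* AddMonoid.End V) (Q : V → V → V) (e : V) : Prop where
  e_ne_zero : e ≠ 0
  add_right : ∀ a x y : V, Q a (x + y) = Q a x + Q a y
  smul_right : ∀ (a : V) (r : k) (x : V), Q a (φ r x) = φ r (Q a x)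
  smul_left : ∀ (r : k) (a x : V), Q (φ r a) x = φ (r * r) (Q a x)
  polar_add_left : ∀ a b c x : V, polar Q (a + b) c x = polar Q a c x + polar Q b c x
  polar_smul_left : ∀ (r : k) (a c x : V), polar Q (φ r a) c x = φ r (polar Q a c x)
  bijective : ∀ a : V, a ≠ 0 → Function.Bijective (Q a)
  Q_e : ∀ x, Q e x = x
  qj2 : ∀ a b x : V, polar Q a (Q a x) b = Q a (polar Q b x a)
  qj3 : ∀ a b x : V, Q (Q b a) x = Q b (Q a (Q b x))

/-- The `k`-module structure on `U` induced by a ring homomorphism `k →+* End(U)`. -/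
def moduleOfEnd {k V : Type*} [Semiring k] [AddCommMonoid V]
    (φ : k →+* AddMonoid.End V) : Module k V where
  smul r u := φ r u
  one_smul u := by show φ 1 u = u; simp
  mul_smul r s u := by show φ (r * s) u = φ r (φ s u); simp [map_mul]
  smul_zero r := (φ r).map_zero
  smul_add r u v := (φ r).map_add u v
  add_smul r s u := by show φ (r + s) u = φ r u + φ s u; rw [map_add]; rfl
  zero_smul u := by show φ 0 u = 0; simp


/-- The normal subgroup of eventually-(w.r.t. an ultrafilter) zero elements of a product
of groups; the quotient by it is the ultraproduct. -/
def eventuallyZero {S : Type*} (F : Ultrafilter S) (Us : S → Type*)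
    [∀ s, AddGroup (Us s)] : AddSubgroup (∀ s, Us s) where
  carrier := {x | {s | x s = 0} ∈ (F : Filter S)}
  zero_mem' := by
    have h : {s | (0 : ∀ s, Us s) s = 0} = Set.univ := by ext s; simp
    show {s | (0 : ∀ s, Us s) s = 0} ∈ (F : Filter S)
    rw [h]
    exact Filter.univ_mem
  add_mem' := by
    intro a b ha hb
    apply Filter.mem_of_superset (Filter.inter_mem ha hb)
    intro s hs
    simp only [Set.mem_inter_iff, Set.mem_setOf_eq] at hs ⊢
    simp [hs.1, hs.2]
  neg_mem' := by
    intro a ha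
    apply Filter.mem_of_superset ha
    intro s hs
    simp only [Set.mem_setOf_eq] at hs ⊢
    simp [hs]

instance eventuallyZero_normal {S : Type*} (F : Ultrafilter S) (Us : S → Type*)
    [∀ s, AddGroup (Us s)] : (eventuallyZero F Us).Normal where
  conj_mem := by
    intro x hx g
    apply Filter.mem_of_superset hx
    intro s hs
    simp only [Set.mem_setOf_eq] at hs ⊢
    simp [hs]


/-! ### Auxiliary lemmas -/

section AuxAlpha

variable {V : Type*} [AddGroup V]

@[simp] theorem alpha_none (a : V) : alpha a none = none := rfl

@[simp] theorem alpha_some (a x : V) : alpha a (some x) = some (x + a) := rfl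

theorem alpha_mul (a b : V) : alpha a * alpha b = alpha (b + a) := by
  ext x; cases x <;> simp [add_assoc]

theorem alpha_mul' (a b : V) (g : Equiv.Perm (Option V)) :
    alpha a * (alpha b * g) = alpha (b + a) * g := by
  rw [← mul_assoc, alpha_mul]

@[simp] theorem alpha_zero : alpha (0 : V) = 1 := by
  ext x; cases x <;> simp

theorem alpha_inv (a : V) : (alpha a)⁻¹ = alpha (-a) := by
  apply inv_eq_of_mul_eq_one_right
  rw [alpha_mul, neg_add_cancel, alpha_zero]

theorem mem_Uinf {g : Equiv.Perm (Option V)} : g ∈ Uinf V ↔ ∃ a : V, alpha a = g := by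
  constructor
  · intro hg
    refine Subgroup.closure_induction (fun x hx => hx) ⟨0, alpha_zero⟩ ?_ ?_ hg
    · rintro x y _ _ ⟨a, rfl⟩ ⟨b, rfl⟩
      exact ⟨b + a, (alpha_mul a b).symm⟩
    · rintro x _ ⟨a, rfl⟩
      exact ⟨-a, (alpha_inv a).symm⟩
  · rintro ⟨a, rfl⟩
    exact Subgroup.subset_closure ⟨a, rfl⟩

theorem pval_eq {g : Equiv.Perm (Option V)} {x y : V} (h : g (some x) = some y) :
    pval g x = y := by simp [pval, h]

theorem some_pval {g : Equiv.Perm (Option V)} {x : V} (h : g (some x) ≠ none) :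
    g (some x) = some (pval g x) := by
  rcases hc : g (some x) with _ | v
  · exact absurd hc h
  · simp [pval, hc]

theorem pval_mul {g h : Equiv.Perm (Option V)} (hfix : h none = none) (x : V) :
    pval (g * h) x = pval g (pval h x) := by
  have hne : h (some x) ≠ none := by
    intro hcon
    exact (Option.some_ne_none x) (h.injective (hcon.trans hfix.symm))
  simp only [pval, Equiv.Perm.mul_apply]
  rw [some_pval hne]
  simp

end AuxAlpha

namespace MSData

section AuxMS

variable {V : Type*} [AddGroup V] (M : MSData V)

theorem tau_inv_none : M.τ⁻¹ none = some 0 := by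
  rw [Equiv.Perm.inv_eq_iff_eq, M.τ_zero]

theorem tau_inv_zero : M.τ⁻¹ (some 0) = none := by
  rw [Equiv.Perm.inv_eq_iff_eq, M.τ_inf]

theorem tau_some_ne_none {a : V} (ha : a ≠ 0) : M.τ (some a) ≠ none := by
  intro h
  have := M.τ.injective (h.trans M.τ_zero.symm)
  exact ha (Option.some_injective _ this)

theorem tau_some_ne_zero (a : V) : M.τ (some a) ≠ some 0 := by
  intro h
  have := M.τ.injective (h.trans M.τ_inf.symm)
  exact Option.some_ne_none a this

theorem tau_inv_some_ne_none {a : V} (ha : a ≠ 0) : M.τ⁻¹ (some a) ≠ none := by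
  intro h
  rw [Equiv.Perm.inv_eq_iff_eq] at h
  rw [M.τ_inf] at h
  exact ha (Option.some_injective _ h.symm).symm

theorem tau_inv_some_ne_zero (a : V) : M.τ⁻¹ (some a) ≠ some 0 := by
  intro h
  rw [Equiv.Perm.inv_eq_iff_eq] at h
  rw [M.τ_zero] at h
  exact Option.some_ne_none a h

theorem pval_tau_ne_zero {a : V} (ha : a ≠ 0) : pval M.τ a ≠ 0 := by
  intro h0
  have := some_pval (M.tau_some_ne_none ha)
  rw [h0] at this
  exact M.tau_some_ne_zero a this

theorem pval_tau_inv_ne_zero {a : V} (ha : a ≠ 0) : pval M.τ⁻¹ a ≠ 0 := by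
  intro h0
  have := some_pval (M.tau_inv_some_ne_none ha)
  rw [h0] at this
  exact M.tau_inv_some_ne_zero a this

theorem pval_tau_tau_inv {a : V} (ha : a ≠ 0) : pval M.τ (pval M.τ⁻¹ a) = a := by
  apply pval_eq
  rw [← some_pval (M.tau_inv_some_ne_none ha)]
  exact M.τ.apply_symm_apply _

theorem pval_tau_inv_tau {a : V} (ha : a ≠ 0) : pval M.τ⁻¹ (pval M.τ a) = a := by
  apply pval_eq
  rw [← some_pval (M.tau_some_ne_none ha)]
  exact M.τ.symm_apply_apply _

theorem mu_eq (a : V) :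
    M.μ a = alpha (-(pval M.τ (-(pval M.τ⁻¹ a)))) * M.τ * alpha (-(pval M.τ⁻¹ a)) *
      M.τ⁻¹ * alpha a := rfl

theorem hua_zero (x : V) : M.hua 0 x = 0 := by
  rw [MSData.hua, if_pos rfl]

theorem mu_apply_none {a : V} (ha : a ≠ 0) : M.μ a none = some 0 := by
  have hd : (-(pval M.τ⁻¹ a)) ≠ 0 := neg_ne_zero.2 (M.pval_tau_inv_ne_zero ha)
  simp only [mu_eq, Equiv.Perm.mul_apply, alpha_none, M.tau_inv_none, alpha_some, zero_add]
  rw [some_pval (M.tau_some_ne_none hd), alpha_some, add_neg_cancel]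

theorem mu_apply_zero {a : V} (ha : a ≠ 0) : M.μ a (some 0) = none := by
  simp only [mu_eq, Equiv.Perm.mul_apply, alpha_some, zero_add]
  rw [some_pval (M.tau_inv_some_ne_none ha), alpha_some, add_neg_cancel, M.τ_zero, alpha_none]

theorem mu_inv {a : V} (ha : a ≠ 0) :
    ∃ b : V, b ≠ 0 ∧ (M.μ a)⁻¹ = M.μ b := by
  have hd : (-(pval M.τ⁻¹ a)) ≠ 0 := neg_ne_zero.2 (M.pval_tau_inv_ne_zero ha)
  refine ⟨pval M.τ (-(pval M.τ⁻¹ a)), M.pval_tau_ne_zero hd, ?_⟩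
  have h1 : pval M.τ⁻¹ (pval M.τ (-(pval M.τ⁻¹ a))) = -(pval M.τ⁻¹ a) :=
    M.pval_tau_inv_tau hd
  have h2 : pval M.τ (-(pval M.τ⁻¹ (pval M.τ (-(pval M.τ⁻¹ a))))) = a := by
    rw [h1, neg_neg]
    exact M.pval_tau_tau_inv ha
  rw [mu_eq, mu_eq, h2, h1]
  simp only [mul_inv_rev, alpha_inv, inv_inv, neg_neg]
  group


theorem mem_Usub_some {g : Equiv.Perm (Option V)} {a : V} :
    g ∈ M.Usub (some a) ↔
      ∃ b : V, (alpha a)⁻¹ * (M.τ⁻¹ * alpha b * M.τ) * alpha a = g := by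
  show g ∈ ((Uinf V).map (MulAut.conj M.τ⁻¹).toMonoidHom).map
      (MulAut.conj (alpha a)⁻¹).toMonoidHom ↔ _
  simp only [Subgroup.mem_map, MulEquiv.coe_toMonoidHom, MulAut.conj_apply, mem_Uinf]
  constructor
  · rintro ⟨x, ⟨y, ⟨b, rfl⟩, rfl⟩, rfl⟩
    exact ⟨b, by group⟩
  · rintro ⟨b, rfl⟩
    exact ⟨M.τ⁻¹ * alpha b * (M.τ⁻¹)⁻¹, ⟨alpha b, ⟨b, rfl⟩, rfl⟩, by group⟩

theorem Usub_le (z : Option V) : M.Usub z ≤ M.littleProjGroup := le_iSup M.Usub z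

theorem alpha_mem (a : V) : alpha a ∈ M.littleProjGroup :=
  M.Usub_le none (Subgroup.subset_closure ⟨a, rfl⟩)

theorem tau_inv_mem {e : V} (hτe : M.τ = M.μ e) : M.τ⁻¹ ∈ M.littleProjGroup := by
  set c := -(pval M.τ (-(pval M.τ⁻¹ e))) with hc
  set d := -(pval M.τ⁻¹ e) with hd
  have he' : M.τ = alpha c * M.τ * alpha d * M.τ⁻¹ * alpha e := hτe
  have key : alpha (-d) * (M.τ⁻¹ * alpha (-c) * M.τ) * alpha (-e) = M.τ⁻¹ := by
    nth_rw 2 [he']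
    simp [mul_assoc, alpha_mul', alpha_mul, alpha_zero]
  rw [← key]
  have h0 : M.τ⁻¹ * alpha (-c) * M.τ ∈ M.Usub (some 0) :=
    M.mem_Usub_some.2 ⟨-c, by simp [alpha_zero]⟩
  exact mul_mem (mul_mem (M.alpha_mem _) (M.Usub_le (some 0) h0)) (M.alpha_mem _)

theorem tau_mem {e : V} (hτe : M.τ = M.μ e) : M.τ ∈ M.littleProjGroup := by
  have := inv_mem (M.tau_inv_mem hτe)
  rwa [inv_inv] at this

theorem mu_mem {e : V} (hτe : M.τ = M.μ e) (a : V) : M.μ a ∈ M.littleProjGroup := by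
  rw [mu_eq]
  exact mul_mem (mul_mem (mul_mem (mul_mem (M.alpha_mem _) (M.tau_mem hτe))
    (M.alpha_mem _)) (M.tau_inv_mem hτe)) (M.alpha_mem _)

theorem notdeg_notsharp {e a b : V} (hτe : M.τ = M.μ e) (ha : a ≠ 0) (hb : b ≠ 0)
    (hne : M.μ a ≠ M.μ b) : ¬ IsSharply2Trans M.littleProjGroup := by
  intro hsharp
  set g := (M.μ b)⁻¹ * M.μ a with hg
  have hmem : g ∈ M.littleProjGroup :=
    mul_mem (inv_mem (M.mu_mem hτe b)) (M.mu_mem hτe a)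
  have h1 : g none = none := by
    simp only [hg, Equiv.Perm.mul_apply, M.mu_apply_none ha]
    rw [Equiv.Perm.inv_eq_iff_eq]
    exact (M.mu_apply_none hb).symm
  have h2 : g (some 0) = some 0 := by
    simp only [hg, Equiv.Perm.mul_apply, M.mu_apply_zero ha]
    rw [Equiv.Perm.inv_eq_iff_eq]
    exact (M.mu_apply_zero hb).symm
  obtain ⟨k, -, huniq⟩ := hsharp none (some 0) none (some 0)
    (fun h => nomatch h) (fun h => nomatch h)
  have e1 : (⟨g, hmem⟩ : M.littleProjGroup) = k := huniq _ ⟨h1, h2⟩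
  have e2 : (1 : M.littleProjGroup) = k := huniq 1 ⟨by simp, by simp⟩
  have : g = 1 := Subtype.ext_iff.1 (e1.trans e2.symm)
  rw [hg] at this
  exact hne (inv_mul_eq_one.1 this).symm

theorem deg_sharp {e : V} (he : e ≠ 0) (hτe : M.τ = M.μ e)
    (hdeg : ∀ a b : V, a ≠ 0 → b ≠ 0 → M.μ a = M.μ b) :
    IsSharply2Trans M.littleProjGroup := by
  have htau2 : M.τ * M.τ = 1 := by
    obtain ⟨b, hb, hinv⟩ := M.mu_inv he
    have hti : (M.τ)⁻¹ = M.τ := by rw [hτe, hinv, hdeg b e hb he]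
    nth_rw 1 [← hti]
    exact inv_mul_cancel _
  have htaui : M.τ⁻¹ = M.τ := inv_eq_of_mul_eq_one_right htau2
  have tau_tau' : ∀ g : Equiv.Perm (Option V), M.τ * (M.τ * g) = g := fun g => by
    rw [← mul_assoc, htau2, one_mul]
  have rel1 : ∀ z : V, z ≠ 0 → ∃ p q : V, M.τ * alpha z * M.τ = alpha p * M.τ * alpha q := by
    intro z hz
    set b := pval M.τ (-z) with hbdef
    have hnz : (-z : V) ≠ 0 := neg_ne_zero.2 hz
    have hb : b ≠ 0 := M.pval_tau_ne_zero hnz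
    have hdb : -(pval M.τ⁻¹ b) = z := by rw [hbdef, M.pval_tau_inv_tau hnz, neg_neg]
    have hμ : M.τ = M.μ b := hτe.trans (hdeg e b he hb)
    set cb := -(pval M.τ (-(pval M.τ⁻¹ b))) with hcb
    have he2 : M.τ = alpha cb * M.τ * alpha z * M.τ * alpha b := by
      calc M.τ = alpha cb * M.τ * alpha (-(pval M.τ⁻¹ b)) * M.τ⁻¹ * alpha b := hμ
        _ = alpha cb * M.τ * alpha z * M.τ * alpha b := by rw [hdb, htaui]
    have h3 : alpha (-cb) * M.τ * alpha (-b) = M.τ * alpha z * M.τ := by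
      nth_rw 1 [he2]
      simp [mul_assoc, alpha_mul', alpha_mul, alpha_zero]
    exact ⟨-cb, -b, h3.symm⟩
  let Ω : Subgroup (Equiv.Perm (Option V)) :=
    { carrier := {g | (∃ x : V, g = alpha x) ∨ ∃ x y : V, g = alpha x * M.τ * alpha y}
      one_mem' := Or.inl ⟨0, alpha_zero.symm⟩
      mul_mem' := by
        rintro g h (⟨x, rfl⟩ | ⟨x, y, rfl⟩) (⟨x', rfl⟩ | ⟨x', y', rfl⟩)
        · exact Or.inl ⟨x' + x, alpha_mul x x'⟩
        · refine Or.inr ⟨x' + x, y', ?_⟩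
          calc alpha x * (alpha x' * M.τ * alpha y')
              = (alpha x * alpha x') * M.τ * alpha y' := by group
            _ = alpha (x' + x) * M.τ * alpha y' := by rw [alpha_mul]
        · refine Or.inr ⟨x, x' + y, ?_⟩
          calc (alpha x * M.τ * alpha y) * alpha x'
              = alpha x * M.τ * (alpha y * alpha x') := by group
            _ = alpha x * M.τ * alpha (x' + y) := by rw [alpha_mul]
        · by_cases hz : x' + y = 0
          · refine Or.inl ⟨y' + x, ?_⟩
            calc (alpha x * M.τ * alpha y) * (alpha x' * M.τ * alpha y')
                = alpha x * (M.τ * (alpha (x' + y) * (M.τ * alpha y'))) := by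
                  rw [← alpha_mul]; group
              _ = alpha x * (M.τ * (M.τ * alpha y')) := by rw [hz, alpha_zero, one_mul]
              _ = alpha x * alpha y' := by rw [tau_tau']
              _ = alpha (y' + x) := alpha_mul _ _
          · obtain ⟨p, q, hpq⟩ := rel1 (x' + y) hz
            refine Or.inr ⟨p + x, y' + q, ?_⟩
            calc (alpha x * M.τ * alpha y) * (alpha x' * M.τ * alpha y')
                = alpha x * (M.τ * alpha (x' + y) * M.τ) * alpha y' := by
                  rw [← alpha_mul]; group
              _ = alpha x * (alpha p * M.τ * alpha q) * alpha y' := by rw [hpq]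
              _ = (alpha x * alpha p) * M.τ * (alpha q * alpha y') := by group
              _ = alpha (p + x) * M.τ * alpha (y' + q) := by rw [alpha_mul, alpha_mul]
      inv_mem' := by
        rintro g (⟨x, rfl⟩ | ⟨x, y, rfl⟩)
        · exact Or.inl ⟨-x, by rw [← alpha_inv]⟩
        · refine Or.inr ⟨-y, -x, ?_⟩
          rw [← alpha_inv, ← alpha_inv, mul_inv_rev, mul_inv_rev, htaui]
          group }
  have hGle : M.littleProjGroup ≤ Ω := by
    refine iSup_le ?_
    rintro (_ | a) g hg
    · rcases mem_Uinf.1 hg with ⟨x, rfl⟩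
      exact Or.inl ⟨x, rfl⟩
    · rcases M.mem_Usub_some.1 hg with ⟨b, rfl⟩
      by_cases hb : b = 0
      · subst hb
        exact Or.inl ⟨0, by simp [alpha_zero]⟩
      · obtain ⟨p, q, hpq⟩ := rel1 b hb
        refine Or.inr ⟨p + -a, a + q, ?_⟩
        calc (alpha a)⁻¹ * (M.τ⁻¹ * alpha b * M.τ) * alpha a
            = alpha (-a) * (M.τ * alpha b * M.τ) * alpha a := by rw [alpha_inv, htaui]
          _ = alpha (-a) * (alpha p * M.τ * alpha q) * alpha a := by rw [hpq]
          _ = (alpha (-a) * alpha p) * M.τ * (alpha q * alpha a) := by group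
          _ = alpha (p + -a) * M.τ * alpha (a + q) := by rw [alpha_mul, alpha_mul]
  have hstab : ∀ g ∈ M.littleProjGroup, g none = none → g (some 0) = some 0 → g = 1 := by
    intro g hg h1 h2
    rcases hGle hg with ⟨x, rfl⟩ | ⟨x, y, rfl⟩
    · have hx : x = 0 := by simpa using h2
      rw [hx, alpha_zero]
    · exfalso
      have hcon : (alpha x * M.τ * alpha y) none = some (0 + x) := by
        simp [Equiv.Perm.mul_apply, M.τ_inf]
      rw [h1] at hcon
      exact nomatch hcon
  have htrans : ∀ x₁ x₂ : Option V, x₁ ≠ x₂ →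
      ∃ g ∈ M.littleProjGroup, g x₁ = none ∧ g x₂ = some 0 := by
    intro x₁ x₂ h12
    cases x₁ with
    | none =>
      cases x₂ with
      | none => exact absurd rfl h12
      | some u =>
        exact ⟨alpha (-u), M.alpha_mem _, rfl, by simp⟩
    | some v =>
      have hτG : M.τ ∈ M.littleProjGroup := M.tau_mem hτe
      set k := M.τ * alpha (-v) with hk
      have hkG : k ∈ M.littleProjGroup := mul_mem hτG (M.alpha_mem _)
      have hk1 : k (some v) = none := by
        simp [hk, Equiv.Perm.mul_apply, M.τ_zero]
      have hne : k x₂ ≠ none := by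
        rw [← hk1]
        exact fun h => h12 (k.injective h).symm
      rcases hx2 : k x₂ with _ | u
      · exact absurd hx2 hne
      · refine ⟨alpha (-u) * k, mul_mem (M.alpha_mem _) hkG, ?_, ?_⟩
        · simp [Equiv.Perm.mul_apply, hk1]
        · simp [Equiv.Perm.mul_apply, hx2]
  intro x₁ x₂ y₁ y₂ hx hy
  obtain ⟨k, hkG, hk1, hk2⟩ := htrans x₁ x₂ hx
  obtain ⟨l, hlG, hl1, hl2⟩ := htrans y₁ y₂ hy
  refine ⟨⟨l⁻¹ * k, mul_mem (inv_mem hlG) hkG⟩, ⟨?_, ?_⟩, ?_⟩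
  · show (l⁻¹ * k) x₁ = y₁
    rw [Equiv.Perm.mul_apply, hk1, Equiv.Perm.inv_eq_iff_eq]
    exact hl1.symm
  · show (l⁻¹ * k) x₂ = y₂
    rw [Equiv.Perm.mul_apply, hk2, Equiv.Perm.inv_eq_iff_eq]
    exact hl2.symm
  · rintro ⟨g, hgG⟩ ⟨e1, e2⟩
    have hki : k⁻¹ none = x₁ := by rw [Equiv.Perm.inv_eq_iff_eq]; exact hk1.symm
    have hki2 : k⁻¹ (some 0) = x₂ := by rw [Equiv.Perm.inv_eq_iff_eq]; exact hk2.symm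
    have hstabg : l * g * k⁻¹ = 1 := by
      apply hstab _ (mul_mem (mul_mem hlG hgG) (inv_mem hkG))
      · show l (g (k⁻¹ none)) = none
        rw [hki, e1, hl1]
      · show l (g (k⁻¹ (some 0))) = some 0
        rw [hki2, e2, hl2]
    have hgeq : g = l⁻¹ * k := eq_inv_mul_iff_mul_eq.2 (mul_inv_eq_one.1 hstabg)
    exact Subtype.ext hgeq

theorem sharp_iff_deg {e : V} (he : e ≠ 0) (hτe : M.τ = M.μ e) :
    IsSharply2Trans M.littleProjGroup ↔
      ∀ a b : V, a ≠ 0 → b ≠ 0 → M.μ a = M.μ b := by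
  constructor
  · intro hsharp
    by_contra hcon
    push_neg at hcon
    obtain ⟨a, b, ha, hb, hne⟩ := hcon
    exact M.notdeg_notsharp hτe ha hb hne hsharp
  · exact M.deg_sharp he hτe

theorem proper_iff_notdeg {e : V} (he : e ≠ 0) (hτe : M.τ = M.μ e) :
    M.IsProper ↔ ¬ ∀ a b : V, a ≠ 0 → b ≠ 0 → M.μ a = M.μ b :=
  not_congr (M.sharp_iff_deg he hτe)

end AuxMS

end MSData


/-! ### Ultraproduct machinery -/

section UP

variable {S : Type*} (F : Ultrafilter S) (Us : S → Type*) [∀ s, AddGroup (Us s)]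

/-- The ultraproduct group. -/
abbrev UPQ := (∀ s, Us s) ⧸ eventuallyZero F Us

theorem up_mk_eq {u v : ∀ s, Us s} :
    (QuotientAddGroup.mk u : UPQ F Us) = QuotientAddGroup.mk v ↔ {s | u s = v s} ∈ F := by
  rw [QuotientAddGroup.eq]
  have hset : {s | (-u + v) s = 0} = {s | u s = v s} := by
    ext s; simp [neg_add_eq_zero]
  show {s | (-u + v) s = 0} ∈ (F : Filter S) ↔ _
  rw [hset]
  exact Ultrafilter.mem_coe

theorem up_mk_eq_zero {u : ∀ s, Us s} :
    (QuotientAddGroup.mk u : UPQ F Us) = 0 ↔ {s | u s = 0} ∈ F := by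
  have h0 : (0 : UPQ F Us) = QuotientAddGroup.mk 0 := rfl
  rw [h0, up_mk_eq]
  rfl

open Classical in
/-- The point of `Option (UPQ F Us)` determined by a family of points. -/
noncomputable def pt (z : ∀ s, Option (Us s)) : Option (UPQ F Us) :=
  if {s | z s = none} ∈ F then none
  else some (QuotientAddGroup.mk fun s => (z s).getD 0)

theorem pt_congr {z z' : ∀ s, Option (Us s)} (h : {s | z s = z' s} ∈ F) :
    pt F Us z = pt F Us z' := by
  have hnone : {s | z s = none} ∈ F ↔ {s | z' s = none} ∈ F := by
    constructor <;> intro hm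
    · refine Filter.mem_of_superset (Filter.inter_mem hm h) ?_
      rintro s ⟨hs1, hs2⟩
      simp only [Set.mem_setOf_eq] at hs1 hs2 ⊢
      rw [← hs2]
      exact hs1
    · refine Filter.mem_of_superset (Filter.inter_mem hm h) ?_
      rintro s ⟨hs1, hs2⟩
      simp only [Set.mem_setOf_eq] at hs1 hs2 ⊢
      rw [hs2]
      exact hs1
  by_cases hn : {s | z s = none} ∈ F
  · rw [pt, pt, if_pos hn, if_pos (hnone.1 hn)]
  · rw [pt, pt, if_neg hn, if_neg (fun hc => hn (hnone.2 hc))]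
    refine congrArg some ((up_mk_eq F Us).2 ?_)
    exact Filter.mem_of_superset h (fun s hs => by
      simp only [Set.mem_setOf_eq] at hs ⊢; rw [hs])

theorem pt_none (z : ∀ s, Option (Us s)) (h : {s | z s = none} ∈ F) :
    pt F Us z = none := by rw [pt, if_pos h]

theorem pt_some (z : ∀ s, Option (Us s)) (h : {s | z s = none} ∉ F) :
    pt F Us z = some (QuotientAddGroup.mk fun s => (z s).getD 0) := by rw [pt, if_neg h]

theorem pt_all_some (x : ∀ s, Us s) :
    pt F Us (fun s => some (x s)) = some (QuotientAddGroup.mk x) := by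
  have hempty : {s | (fun s => some (x s)) s = none} = (∅ : Set S) := by
    ext s; simp
  rw [pt, if_neg (by rw [hempty]; exact Filter.empty_notMem _)]
  rfl

theorem pt_all_none : pt F Us (fun _ => none) = none :=
  pt_none F Us _ (Filter.mem_of_superset Filter.univ_mem (fun _ _ => rfl))

theorem setoid_mem {x y : ∀ s, Us s}
    (hxy : (QuotientAddGroup.leftRel (eventuallyZero F Us)) x y) :
    {s | x s = y s} ∈ F := by
  have hm : -x + y ∈ eventuallyZero F Us := QuotientAddGroup.leftRel_apply.1 hxy
  have hset : {s | (-x + y) s = 0} = {s | x s = y s} := by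
    ext s; simp [neg_add_eq_zero]
  have : {s | (-x + y) s = 0} ∈ (F : Filter S) := hm
  rwa [hset] at this

/-- The action of a family of permutations on `Option (UPQ F Us)`. -/
noncomputable def act (g : ∀ s, Equiv.Perm (Option (Us s)))
    (w : Option (UPQ F Us)) : Option (UPQ F Us) :=
  w.elim (pt F Us fun s => g s none)
    (fun q => Quotient.liftOn' q (fun x => pt F Us fun s => g s (some (x s)))
      (fun x y hxy => pt_congr F Us (Filter.mem_of_superset (setoid_mem F Us hxy)
        (fun s hs => congrArg (fun t => g s (some t)) hs))))

theorem act_none (g : ∀ s, Equiv.Perm (Option (Us s))) :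
    act F Us g none = pt F Us (fun s => g s none) := rfl

theorem act_mk (g : ∀ s, Equiv.Perm (Option (Us s))) (x : ∀ s, Us s) :
    act F Us g (some (QuotientAddGroup.mk x)) = pt F Us (fun s => g s (some (x s))) := rfl

theorem act_pt (g : ∀ s, Equiv.Perm (Option (Us s))) (z : ∀ s, Option (Us s)) :
    act F Us g (pt F Us z) = pt F Us (fun s => g s (z s)) := by
  by_cases h : {s | z s = none} ∈ F
  · rw [pt_none F Us z h, act_none]
    exact pt_congr F Us (Filter.mem_of_superset h
      (fun s hs => by simp only [Set.mem_setOf_eq] at hs ⊢; rw [hs]))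
  · rw [pt_some F Us z h, act_mk]
    refine pt_congr F Us (Filter.mem_of_superset
      (Ultrafilter.compl_mem_iff_notMem.2 h) (fun s hs => ?_))
    simp only [Set.mem_compl_iff, Set.mem_setOf_eq] at hs
    simp only [Set.mem_setOf_eq]
    rcases hz : z s with _ | v
    · exact absurd hz hs
    · rfl

theorem act_comp (g h : ∀ s, Equiv.Perm (Option (Us s))) (w : Option (UPQ F Us)) :
    act F Us g (act F Us h w) = act F Us (fun s => g s * h s) w := by
  cases w with
  | none => rw [act_none, act_pt, act_none]; rfl
  | some q =>
    induction q using Quotient.inductionOn' with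
    | h x =>
      rw [show (Quotient.mk'' x : UPQ F Us) = QuotientAddGroup.mk x from rfl,
        act_mk, act_pt, act_mk]
      rfl

theorem act_id (w : Option (UPQ F Us)) :
    act F Us (fun _ => 1) w = w := by
  cases w with
  | none => rw [act_none]; exact pt_all_none F Us
  | some q =>
    induction q using Quotient.inductionOn' with
    | h x =>
      rw [show (Quotient.mk'' x : UPQ F Us) = QuotientAddGroup.mk x from rfl, act_mk]
      exact pt_all_some F Us x

/-- The permutation of the ultraproduct induced by a family of permutations. -/
noncomputable def Phi (g : ∀ s, Equiv.Perm (Option (Us s))) :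
    Equiv.Perm (Option (UPQ F Us)) where
  toFun := act F Us g
  invFun := act F Us fun s => (g s)⁻¹
  left_inv := fun w => by
    rw [act_comp]
    have : (fun s => (g s)⁻¹ * g s) = (fun _ => 1 : ∀ s, Equiv.Perm (Option (Us s))) := by
      funext s; simp
    rw [this]
    exact act_id F Us w
  right_inv := fun w => by
    rw [act_comp]
    have : (fun s => g s * (g s)⁻¹) = (fun _ => 1 : ∀ s, Equiv.Perm (Option (Us s))) := by
      funext s; simp
    rw [this]
    exact act_id F Us w

theorem Phi_apply (g : ∀ s, Equiv.Perm (Option (Us s))) (w : Option (UPQ F Us)) :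
    Phi F Us g w = act F Us g w := rfl

theorem Phi_inv (g : ∀ s, Equiv.Perm (Option (Us s))) :
    (Phi F Us g)⁻¹ = Phi F Us (fun s => (g s)⁻¹) := rfl

theorem Phi_mul (g h : ∀ s, Equiv.Perm (Option (Us s))) :
    Phi F Us (fun s => g s * h s) = Phi F Us g * Phi F Us h :=
  Equiv.ext fun w => (act_comp F Us g h w).symm

theorem Phi_one : Phi F Us (fun _ => 1) = 1 :=
  Equiv.ext fun w => act_id F Us w

theorem Phi_congr {g g' : ∀ s, Equiv.Perm (Option (Us s))}
    (h : {s | g s = g' s} ∈ F) : Phi F Us g = Phi F Us g' := by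
  apply Equiv.ext
  intro w
  rw [Phi_apply, Phi_apply]
  cases w with
  | none =>
    rw [act_none, act_none]
    exact pt_congr F Us (Filter.mem_of_superset h
      (fun s hs => by simp only [Set.mem_setOf_eq] at hs ⊢; rw [hs]))
  | some q =>
    induction q using Quotient.inductionOn' with
    | h x =>
      rw [show (Quotient.mk'' x : UPQ F Us) = QuotientAddGroup.mk x from rfl,
        act_mk, act_mk]
      exact pt_congr F Us (Filter.mem_of_superset h
        (fun s hs => by simp only [Set.mem_setOf_eq] at hs ⊢; rw [hs]))

theorem Phi_alpha (a : ∀ s, Us s) :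
    Phi F Us (fun s => alpha (a s)) = alpha (QuotientAddGroup.mk a) := by
  apply Equiv.ext
  intro w
  rw [Phi_apply]
  cases w with
  | none => rw [act_none]; exact pt_all_none F Us
  | some q =>
    induction q using Quotient.inductionOn' with
    | h x =>
      rw [show (Quotient.mk'' x : UPQ F Us) = QuotientAddGroup.mk x from rfl, act_mk]
      have : (fun s => alpha (a s) (some (x s))) = fun s => some (x s + a s) := rfl
      rw [this, pt_all_some, alpha_some]
      rfl

theorem pval_Phi (g : ∀ s, Equiv.Perm (Option (Us s))) (x : ∀ s, Us s) :
    pval (Phi F Us g) (QuotientAddGroup.mk x) =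
      QuotientAddGroup.mk (s := eventuallyZero F Us) (fun s => pval (g s) (x s)) := by
  have happ : Phi F Us g (some (QuotientAddGroup.mk x)) =
      pt F Us (fun s => g s (some (x s))) := rfl
  rw [pval, happ]
  by_cases h : {s | g s (some (x s)) = none} ∈ F
  · rw [pt_none F Us _ h]
    symm
    rw [show ((none : Option (UPQ F Us)).getD 0) = 0 from rfl]
    exact (up_mk_eq_zero F Us).2 (Filter.mem_of_superset h (fun s hs => by
      simp only [Set.mem_setOf_eq] at hs ⊢; simp [pval, hs]))
  · rw [pt_some F Us _ h]
    rfl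

theorem Phi_ne {g g' : ∀ s, Equiv.Perm (Option (Us s))}
    (h : {s | g s = g' s} ∉ F) : Phi F Us g ≠ Phi F Us g' := by
  classical
  intro heq
  have hD : {s | g s = g' s}ᶜ ∈ F := Ultrafilter.compl_mem_iff_notMem.2 h
  set w : ∀ s, Option (Us s) :=
    fun s => if hex : ∃ v, g s v ≠ g' s v then hex.choose else none with hwdef
  have hw : ∀ s ∈ {s | g s = g' s}ᶜ, g s (w s) ≠ g' s (w s) := by
    intro s hs
    simp only [Set.mem_compl_iff, Set.mem_setOf_eq] at hs
    have hex : ∃ v, g s v ≠ g' s v := by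
      by_contra hc
      push_neg at hc
      exact hs (Equiv.ext hc)
    simp only [hwdef, dif_pos hex]
    exact hex.choose_spec
  set u : ∀ s, Option (Us s) := fun s => g s (w s) with hudef
  set u' : ∀ s, Option (Us s) := fun s => g' s (w s) with hudef'
  have hne : {s | u s ≠ u' s} ∈ F := Filter.mem_of_superset hD hw
  have hval : pt F Us u = pt F Us u' := by
    have h1 : Phi F Us g (pt F Us w) = pt F Us u := act_pt F Us g w
    have h2 : Phi F Us g' (pt F Us w) = pt F Us u' := act_pt F Us g' w
    rw [← h1, ← h2, heq]
  by_cases h1 : {s | u s = none} ∈ F <;> by_cases h2 : {s | u' s = none} ∈ F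
  · refine Filter.empty_notMem (F : Filter S) ?_
    refine Filter.mem_of_superset (Filter.inter_mem hne (Filter.inter_mem h1 h2)) ?_
    rintro s ⟨hsne, hs1, hs2⟩
    exact absurd (hs1.trans hs2.symm) hsne
  · rw [pt_none F Us u h1, pt_some F Us u' h2] at hval
    exact nomatch hval
  · rw [pt_some F Us u h1, pt_none F Us u' h2] at hval
    exact nomatch hval
  · rw [pt_some F Us u h1, pt_some F Us u' h2] at hval
    have hE : {s | (u s).getD 0 = (u' s).getD 0} ∈ F :=
      (up_mk_eq F Us).1 (Option.some_injective _ hval)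
    refine Filter.empty_notMem (F : Filter S) ?_
    refine Filter.mem_of_superset (Filter.inter_mem hne (Filter.inter_mem hE
      (Filter.inter_mem (Ultrafilter.compl_mem_iff_notMem.2 h1)
        (Ultrafilter.compl_mem_iff_notMem.2 h2)))) ?_
    rintro s ⟨hsne, hsE, hs1, hs2⟩
    simp only [Set.mem_compl_iff, Set.mem_setOf_eq] at hsne hsE hs1 hs2
    apply hsne
    rcases hu : u s with _ | v
    · exact absurd hu hs1
    · rcases hu' : u' s with _ | v'
      · exact absurd hu' hs2
      · rw [hu, hu'] at hsE
        simp only [Option.getD_some] at hsE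
        rw [hsE]

end UP


/-! ### The ultraproduct Moufang set -/

section Main

variable {S : Type*} (F : Ultrafilter S) {Us : S → Type*} [∀ s, AddGroup (Us s)]
  (Ms : ∀ s, MSData (Us s))

/-- The `MSData` structure on the ultraproduct. -/
noncomputable def MhatData : MSData (UPQ F Us) where
  τ := Phi F Us (fun s => (Ms s).τ)
  τ_zero := by
    have h0 : (some (0 : UPQ F Us)) = some (QuotientAddGroup.mk 0) := rfl
    rw [h0, Phi_apply, act_mk]
    have h1 : (fun s => (Ms s).τ (some ((0 : ∀ s, Us s) s)))
        = (fun _ => none : ∀ s, Option (Us s)) := by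
      funext s
      exact (Ms s).τ_zero
    rw [h1, pt_all_none]
  τ_inf := by
    rw [Phi_apply, act_none]
    have h1 : (fun s => (Ms s).τ none) = (fun s => some ((0 : ∀ s, Us s) s)) := by
      funext s
      exact (Ms s).τ_inf
    rw [h1, pt_all_some]
    rfl

theorem Phi_inv2 (g : ∀ s, Equiv.Perm (Option (Us s))) :
    Phi F Us (fun s => (g s)⁻¹) = (Phi F Us g)⁻¹ := (Phi_inv F Us g).symm

theorem MhatData_tau : (MhatData F Ms).τ = Phi F Us (fun s => (Ms s).τ) := rfl

theorem MhatData_tau_inv : (MhatData F Ms).τ⁻¹ = Phi F Us (fun s => ((Ms s).τ)⁻¹) :=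
  (Phi_inv2 F _).symm

theorem MhatData_tau_some (a : ∀ s, Us s) (ha : ∀ s, a s ≠ 0) :
    (MhatData F Ms).τ (some (QuotientAddGroup.mk a)) =
      some (QuotientAddGroup.mk (s := eventuallyZero F Us) fun s => pval (Ms s).τ (a s)) := by
  rw [MhatData_tau, Phi_apply, act_mk]
  have h1 : (fun s => (Ms s).τ (some (a s)))
      = fun s => some (pval (Ms s).τ (a s)) := by
    funext s
    exact some_pval ((Ms s).tau_some_ne_none (ha s))
  rw [h1, pt_all_some]

theorem up_mk_neg (u : ∀ s, Us s) :
    -(QuotientAddGroup.mk u : UPQ F Us) = QuotientAddGroup.mk (fun s => -(u s)) := rfl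

theorem MhatData_mu (a : ∀ s, Us s) :
    (MhatData F Ms).μ (QuotientAddGroup.mk a) = Phi F Us (fun s => (Ms s).μ (a s)) := by
  rw [MSData.mu_eq]
  have s1 : pval (MhatData F Ms).τ⁻¹ (QuotientAddGroup.mk a)
      = QuotientAddGroup.mk (fun s => pval ((Ms s).τ)⁻¹ (a s)) := by
    rw [MhatData_tau_inv, pval_Phi]
  rw [s1, up_mk_neg]
  have s2 : pval (MhatData F Ms).τ
      (QuotientAddGroup.mk (fun s => -(pval ((Ms s).τ)⁻¹ (a s))))
      = QuotientAddGroup.mk (fun s => pval (Ms s).τ (-(pval ((Ms s).τ)⁻¹ (a s)))) := by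
    rw [MhatData_tau, pval_Phi]
  rw [s2, up_mk_neg, ← Phi_alpha, ← Phi_alpha, ← Phi_alpha, MhatData_tau_inv, MhatData_tau,
    ← Phi_mul, ← Phi_mul, ← Phi_mul, ← Phi_mul]
  exact congrArg (Phi F Us) (funext fun s => ((Ms s).mu_eq (a s)).symm)

theorem MhatData_hua (x a : ∀ s, Us s) (ha : ∀ s, a s ≠ 0) :
    (MhatData F Ms).hua (QuotientAddGroup.mk a) (QuotientAddGroup.mk x) =
      QuotientAddGroup.mk (s := eventuallyZero F Us)
        (fun s => (Ms s).hua (a s) (x s)) := by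
  have hane : (QuotientAddGroup.mk a : UPQ F Us) ≠ 0 := by
    intro h
    have hmem := (up_mk_eq_zero F Us).1 h
    have hempty : {s | a s = 0} = (∅ : Set S) := by
      ext s; simp [ha s]
    rw [hempty] at hmem
    exact Filter.empty_notMem (F : Filter S) hmem
  rw [MSData.hua, if_neg hane, MhatData_mu, MhatData_tau, ← Phi_mul, pval_Phi]
  congr 1
  funext s
  rw [MSData.hua, if_neg (ha s)]

theorem Phi_shape (a c : ∀ s, Us s) :
    Phi F Us (fun s => (alpha (a s))⁻¹ * ((Ms s).τ⁻¹ * alpha (c s) * (Ms s).τ) * alpha (a s))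
      = (alpha (QuotientAddGroup.mk a))⁻¹ *
          ((MhatData F Ms).τ⁻¹ * alpha (QuotientAddGroup.mk c) * (MhatData F Ms).τ) *
          alpha (QuotientAddGroup.mk a) := by
  rw [Phi_mul, Phi_mul, Phi_mul, Phi_mul, Phi_inv2, Phi_inv2, Phi_alpha, Phi_alpha,
    MhatData_tau]

theorem up_T2 (z : Option (UPQ F Us)) (g : Equiv.Perm (Option (UPQ F Us)))
    (hg : g ∈ (MhatData F Ms).Usub z) :
    ∃ (gs : ∀ s, Equiv.Perm (Option (Us s))) (zs : ∀ s, Option (Us s)),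
      (∀ s, gs s ∈ (Ms s).Usub (zs s)) ∧ pt F Us zs = z ∧ Phi F Us gs = g := by
  cases z with
  | none =>
    rcases mem_Uinf.1 hg with ⟨q, rfl⟩
    obtain ⟨c, rfl⟩ := QuotientAddGroup.mk_surjective q
    exact ⟨fun s => alpha (c s), fun _ => none,
      fun s => Subgroup.subset_closure ⟨c s, rfl⟩, pt_all_none F Us, Phi_alpha F Us c⟩
  | some q =>
    obtain ⟨a, rfl⟩ := QuotientAddGroup.mk_surjective q
    rcases (MhatData F Ms).mem_Usub_some.1 hg with ⟨b', hb'⟩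
    obtain ⟨c, rfl⟩ := QuotientAddGroup.mk_surjective b'
    refine ⟨fun s => (alpha (a s))⁻¹ * ((Ms s).τ⁻¹ * alpha (c s) * (Ms s).τ) * alpha (a s),
      fun s => some (a s), fun s => (Ms s).mem_Usub_some.2 ⟨c s, rfl⟩,
      pt_all_some F Us a, ?_⟩
    rw [Phi_shape]
    exact hb'

theorem up_T1 {gs : ∀ s, Equiv.Perm (Option (Us s))} {zs : ∀ s, Option (Us s)}
    {z : Option (UPQ F Us)}
    (hmem : {s | gs s ∈ (Ms s).Usub (zs s)} ∈ F) (hz : pt F Us zs = z) :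
    Phi F Us gs ∈ (MhatData F Ms).Usub z := by
  classical
  cases z with
  | none =>
    have hA : {s | zs s = none} ∈ F := by
      by_contra hc
      rw [pt_some F Us zs hc] at hz
      exact nomatch hz
    set c : ∀ s, Us s :=
      fun s => if hex : ∃ b, alpha b = gs s then hex.choose else 0 with hcdef
    have hce : {s | gs s = alpha (c s)} ∈ F := by
      refine Filter.mem_of_superset (Filter.inter_mem hA hmem) ?_
      rintro s ⟨h1, h2⟩
      simp only [Set.mem_setOf_eq] at h1 h2 ⊢
      rw [h1] at h2
      have hex : ∃ b, alpha b = gs s := mem_Uinf.1 h2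
      rw [hcdef]
      simp only [dif_pos hex]
      exact hex.choose_spec.symm
    rw [Phi_congr F Us hce, Phi_alpha]
    exact Subgroup.subset_closure ⟨QuotientAddGroup.mk c, rfl⟩
  | some q =>
    have hB : {s | zs s = none} ∉ F := by
      intro hc
      rw [pt_none F Us zs hc] at hz
      exact nomatch hz
    rw [pt_some F Us zs hB] at hz
    have hq : q = QuotientAddGroup.mk (fun s => (zs s).getD 0) :=
      (Option.some_injective _ hz).symm
    subst hq
    set a : ∀ s, Us s := fun s => (zs s).getD 0 with hadef
    set b : ∀ s, Us s := fun s =>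
      if hex : ∃ v, (alpha (a s))⁻¹ * ((Ms s).τ⁻¹ * alpha v * (Ms s).τ) * alpha (a s) = gs s
      then hex.choose else 0 with hbdef
    have hbe : {s | gs s =
        (alpha (a s))⁻¹ * ((Ms s).τ⁻¹ * alpha (b s) * (Ms s).τ) * alpha (a s)} ∈ F := by
      refine Filter.mem_of_superset
        (Filter.inter_mem (Ultrafilter.compl_mem_iff_notMem.2 hB) hmem) ?_
      rintro s ⟨h1, h2⟩
      simp only [Set.mem_compl_iff, Set.mem_setOf_eq] at h1 h2 ⊢
      have hzs : zs s = some (a s) := by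
        rcases hv : zs s with _ | v
        · exact absurd hv h1
        · rw [hadef]
          simp only [hv]
          rfl
      rw [hzs] at h2
      have hex : ∃ v,
          (alpha (a s))⁻¹ * ((Ms s).τ⁻¹ * alpha v * (Ms s).τ) * alpha (a s) = gs s :=
        (Ms s).mem_Usub_some.1 h2
      rw [hbdef]
      simp only [dif_pos hex]
      exact hex.choose_spec.symm
    rw [Phi_congr F Us hbe, Phi_shape]
    exact (MhatData F Ms).mem_Usub_some.2 ⟨QuotientAddGroup.mk b, rfl⟩

theorem MhatData_MS (hMS : ∀ s, (Ms s).IsMoufangSet) : (MhatData F Ms).IsMoufangSet := by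
  intro y g hg x
  obtain ⟨gs, ys, hmy, hpy, rfl⟩ := up_T2 F Ms y g hg
  ext h
  simp only [Subgroup.mem_map, MulEquiv.coe_toMonoidHom, MulAut.conj_apply]
  constructor
  · rintro ⟨u, hu, rfl⟩
    obtain ⟨us, xs, hmx, hpx, rfl⟩ := up_T2 F Ms x u hu
    have hcomp : (Phi F Us gs)⁻¹ * Phi F Us us * ((Phi F Us gs)⁻¹)⁻¹
        = Phi F Us (fun s => (gs s)⁻¹ * us s * ((gs s)⁻¹)⁻¹) := by
      rw [Phi_mul, Phi_mul, Phi_inv2, Phi_inv2, Phi_inv2]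
    rw [hcomp]
    refine up_T1 F Ms (zs := fun s => gs s (xs s)) ?_ ?_
    · refine Filter.mem_of_superset Filter.univ_mem (fun s _ => ?_)
      have hmsub := hMS s (ys s) (gs s) (hmy s) (xs s)
      rw [Set.mem_setOf_eq, ← hmsub]
      exact Subgroup.mem_map.2 ⟨us s, hmx s, rfl⟩
    · rw [← hpx]
      exact (act_pt F Us gs xs).symm
  · intro hmem'
    obtain ⟨vs, zs, hmv, hpz, rfl⟩ := up_T2 F Ms _ h hmem'
    refine ⟨Phi F Us (fun s => gs s * vs s * (gs s)⁻¹), ?_, ?_⟩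
    · refine up_T1 F Ms (zs := fun s => (gs s)⁻¹ (zs s)) ?_ ?_
      · refine Filter.mem_of_superset Filter.univ_mem (fun s _ => ?_)
        have hmsub := hMS s (ys s) (gs s)⁻¹ (inv_mem (hmy s)) (zs s)
        rw [Set.mem_setOf_eq, ← hmsub]
        refine Subgroup.mem_map.2 ⟨vs s, hmv s, ?_⟩
        simp [MulAut.conj_apply]
      · have h1 : Phi F Us (fun s => (gs s)⁻¹) (pt F Us zs)
            = pt F Us (fun s => (gs s)⁻¹ (zs s)) := act_pt F Us _ zs
        rw [← h1, hpz, Phi_inv2]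
        exact Equiv.symm_apply_apply _ _
    · rw [Phi_mul, Phi_mul, Phi_inv2]
      group


theorem mk_ne_zero {a : ∀ s, Us s} (ha : ∀ s, a s ≠ 0) :
    (QuotientAddGroup.mk a : UPQ F Us) ≠ 0 := by
  intro h
  have hmem := (up_mk_eq_zero F Us).1 h
  have hempty : {s | a s = 0} = (∅ : Set S) := by ext s; simp [ha s]
  rw [hempty] at hmem
  exact Filter.empty_notMem (F : Filter S) hmem

theorem patch_rep (es : ∀ s, Us s) (hes : ∀ s, es s ≠ 0) {q : UPQ F Us} (hq : q ≠ 0) :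
    ∃ a : ∀ s, Us s, (∀ s, a s ≠ 0) ∧ QuotientAddGroup.mk a = q := by
  classical
  obtain ⟨u, rfl⟩ := QuotientAddGroup.mk_surjective q
  have h0 : {s | u s = 0} ∉ F := fun h => hq ((up_mk_eq_zero F Us).2 h)
  refine ⟨fun s => if u s = 0 then es s else u s, fun s => ?_, ?_⟩
  · by_cases h : u s = 0
    · simp only [if_pos h]
      exact hes s
    · simp only [if_neg h]
      exact h
  · refine (up_mk_eq F Us).2 ?_
    refine Filter.mem_of_superset (Ultrafilter.compl_mem_iff_notMem.2 h0) (fun s hs => ?_)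
    simp only [Set.mem_compl_iff, Set.mem_setOf_eq] at hs ⊢
    rw [if_neg hs]

theorem MhatData_tau_mu (es : ∀ s, Us s) (hτs : ∀ s, (Ms s).τ = (Ms s).μ (es s)) :
    (MhatData F Ms).τ = (MhatData F Ms).μ (QuotientAddGroup.mk es) := by
  rw [MhatData_mu, MhatData_tau]
  exact congrArg (Phi F Us) (funext fun s => hτs s)

theorem MhatData_deg_iff (es : ∀ s, Us s) (hes : ∀ s, es s ≠ 0) :
    (∀ a b : UPQ F Us, a ≠ 0 → b ≠ 0 → (MhatData F Ms).μ a = (MhatData F Ms).μ b)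
      ↔ {s | ∀ a b : Us s, a ≠ 0 → b ≠ 0 → (Ms s).μ a = (Ms s).μ b} ∈ F := by
  classical
  constructor
  · intro hdeg
    by_contra hn
    have hN : {s | ∀ a b : Us s, a ≠ 0 → b ≠ 0 → (Ms s).μ a = (Ms s).μ b}ᶜ ∈ F :=
      Ultrafilter.compl_mem_iff_notMem.2 hn
    set ab : ∀ s, Us s × Us s := fun s =>
      if h : ∃ p : Us s × Us s, p.1 ≠ 0 ∧ p.2 ≠ 0 ∧ (Ms s).μ p.1 ≠ (Ms s).μ p.2
      then h.choose else (es s, es s) with habdef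
    have hane : ∀ s, (ab s).1 ≠ 0 := by
      intro s
      by_cases h : ∃ p : Us s × Us s, p.1 ≠ 0 ∧ p.2 ≠ 0 ∧ (Ms s).μ p.1 ≠ (Ms s).μ p.2
      · simp only [habdef, dif_pos h]
        exact h.choose_spec.1
      · simp only [habdef, dif_neg h]
        exact hes s
    have hbne : ∀ s, (ab s).2 ≠ 0 := by
      intro s
      by_cases h : ∃ p : Us s × Us s, p.1 ≠ 0 ∧ p.2 ≠ 0 ∧ (Ms s).μ p.1 ≠ (Ms s).μ p.2
      · simp only [habdef, dif_pos h]
        exact h.choose_spec.2.1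
      · simp only [habdef, dif_neg h]
        exact hes s
    have hspec : ∀ s ∈ {s | ∀ a b : Us s, a ≠ 0 → b ≠ 0 → (Ms s).μ a = (Ms s).μ b}ᶜ,
        (Ms s).μ ((ab s).1) ≠ (Ms s).μ ((ab s).2) := by
      intro s hs
      simp only [Set.mem_compl_iff, Set.mem_setOf_eq] at hs
      push_neg at hs
      obtain ⟨x, y, hx, hy, hxy⟩ := hs
      have hex : ∃ p : Us s × Us s, p.1 ≠ 0 ∧ p.2 ≠ 0 ∧ (Ms s).μ p.1 ≠ (Ms s).μ p.2 :=
        ⟨(x, y), hx, hy, hxy⟩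
      simp only [habdef, dif_pos hex]
      exact hex.choose_spec.2.2
    have heq := hdeg (QuotientAddGroup.mk fun s => (ab s).1)
      (QuotientAddGroup.mk fun s => (ab s).2) (mk_ne_zero F hane) (mk_ne_zero F hbne)
    rw [MhatData_mu, MhatData_mu] at heq
    refine Phi_ne F Us ?_ heq
    intro hset
    refine Filter.empty_notMem (F : Filter S)
      (Filter.mem_of_superset (Filter.inter_mem hset hN) ?_)
    rintro s ⟨h1, h2⟩
    exact absurd h1 (hspec s h2)
  · intro hF a b ha hb
    obtain ⟨a', hane, haeq⟩ := patch_rep F es hes ha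
    obtain ⟨b', hbne, hbeq⟩ := patch_rep F es hes hb
    rw [← haeq, ← hbeq, MhatData_mu, MhatData_mu]
    exact Phi_congr F Us (Filter.mem_of_superset hF
      (fun s hs => hs (a' s) (b' s) (hane s) (hbne s)))

theorem MhatData_proper_iff (es : ∀ s, Us s) (hes : ∀ s, es s ≠ 0)
    (hτs : ∀ s, (Ms s).τ = (Ms s).μ (es s)) :
    (MhatData F Ms).IsProper ↔ {s | (Ms s).IsProper} ∈ F := by
  rw [(MhatData F Ms).proper_iff_notdeg (mk_ne_zero F hes) (MhatData_tau_mu F Ms es hτs)]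
  have h2 : {s | (Ms s).IsProper}
      = {s | ∀ a b : Us s, a ≠ 0 → b ≠ 0 → (Ms s).μ a = (Ms s).μ b}ᶜ := by
    ext s
    simp only [Set.mem_compl_iff, Set.mem_setOf_eq]
    exact (Ms s).proper_iff_notdeg (hes s) (hτs s)
  rw [h2, Ultrafilter.compl_mem_iff_notMem]
  exact not_congr (MhatData_deg_iff F Ms es hes)

theorem MhatData_special_iff (es : ∀ s, Us s) (hes : ∀ s, es s ≠ 0) :
    (MhatData F Ms).IsSpecial ↔ {s | (Ms s).IsSpecial} ∈ F := by
  classical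
  constructor
  · intro hsp
    by_contra hn
    have hN : {s | (Ms s).IsSpecial}ᶜ ∈ F := Ultrafilter.compl_mem_iff_notMem.2 hn
    set a : ∀ s, Us s := fun s =>
      if h : ∃ v : Us s, v ≠ 0 ∧
          (Ms s).τ (some (-v)) ≠ ((Ms s).τ (some v)).map (fun u => -u)
      then h.choose else es s with hadef
    have hane : ∀ s, a s ≠ 0 := by
      intro s
      by_cases h : ∃ v : Us s, v ≠ 0 ∧
          (Ms s).τ (some (-v)) ≠ ((Ms s).τ (some v)).map (fun u => -u)
      · simp only [hadef, dif_pos h]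
        exact h.choose_spec.1
      · simp only [hadef, dif_neg h]
        exact hes s
    have hspec : ∀ s ∈ {s | (Ms s).IsSpecial}ᶜ,
        (Ms s).τ (some (-(a s))) ≠ ((Ms s).τ (some (a s))).map (fun u => -u) := by
      intro s hs
      simp only [Set.mem_compl_iff, Set.mem_setOf_eq] at hs
      rw [MSData.IsSpecial] at hs
      push_neg at hs
      obtain ⟨v, hv, hvne⟩ := hs
      have hex : ∃ v : Us s, v ≠ 0 ∧
          (Ms s).τ (some (-v)) ≠ ((Ms s).τ (some v)).map (fun u => -u) := ⟨v, hv, hvne⟩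
      simp only [hadef, dif_pos hex]
      exact hex.choose_spec.2
    have h1 := hsp (QuotientAddGroup.mk a) (mk_ne_zero F hane)
    have hL : (MhatData F Ms).τ (some (-(QuotientAddGroup.mk a : UPQ F Us)))
        = some (QuotientAddGroup.mk fun s => pval (Ms s).τ (-(a s))) := by
      rw [up_mk_neg]
      exact MhatData_tau_some F Ms _ (fun s => neg_ne_zero.2 (hane s))
    have hR : ((MhatData F Ms).τ (some (QuotientAddGroup.mk a))).map
        (fun u : UPQ F Us => -u)
        = some (QuotientAddGroup.mk fun s => -(pval (Ms s).τ (a s))) := by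
      rw [MhatData_tau_some F Ms a hane]
      simp only [Option.map_some]
      rw [up_mk_neg]
    rw [hL, hR] at h1
    have hE := (up_mk_eq F Us).1 (Option.some_injective _ h1)
    refine Filter.empty_notMem (F : Filter S)
      (Filter.mem_of_superset (Filter.inter_mem hE hN) ?_)
    rintro s ⟨h2, h3⟩
    apply hspec s h3
    have hsome1 : (Ms s).τ (some (-(a s))) = some (pval (Ms s).τ (-(a s))) :=
      some_pval ((Ms s).tau_some_ne_none (neg_ne_zero.2 (hane s)))
    have hsome2 : (Ms s).τ (some (a s)) = some (pval (Ms s).τ (a s)) :=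
      some_pval ((Ms s).tau_some_ne_none (hane s))
    rw [hsome1, hsome2]
    simp only [Option.map_some]
    exact congrArg some h2
  · intro hF q hq
    obtain ⟨a, hane, rfl⟩ := patch_rep F es hes hq
    rw [up_mk_neg, MhatData_tau_some F Ms _ (fun s => neg_ne_zero.2 (hane s)),
      MhatData_tau_some F Ms a hane]
    simp only [Option.map_some]
    rw [up_mk_neg]
    refine congrArg some ((up_mk_eq F Us).2
      (Filter.mem_of_superset hF (fun s hs => ?_)))
    have hsp : (Ms s).IsSpecial := hs
    have hv := hsp (a s) (hane s)
    have hsome1 : (Ms s).τ (some (-(a s))) = some (pval (Ms s).τ (-(a s))) :=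
      some_pval ((Ms s).tau_some_ne_none (neg_ne_zero.2 (hane s)))
    have hsome2 : (Ms s).τ (some (a s)) = some (pval (Ms s).τ (a s)) :=
      some_pval ((Ms s).tau_some_ne_none (hane s))
    rw [hsome1, hsome2] at hv
    simp only [Option.map_some] at hv
    exact Option.some_injective _ hv

/-- The componentwise endomorphism of the product. -/
def TpiHom (T : ∀ s, Us s →+ Us s) : (∀ s, Us s) →+ (∀ s, Us s) :=
  AddMonoidHom.mk' (fun x s => T s (x s)) (fun x y => funext fun s => map_add (T s) _ _)

theorem TpiHom_le (T : ∀ s, Us s →+ Us s) :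
    eventuallyZero F Us ≤ (eventuallyZero F Us).comap (TpiHom T) := by
  intro x hx
  have hx' : {s | x s = 0} ∈ F := hx
  refine Filter.mem_of_superset hx' (fun s hs => ?_)
  simp only [Set.mem_setOf_eq] at hs ⊢
  show T s (x s) = 0
  rw [hs, map_zero]

/-- The induced endomorphism of the ultraproduct. -/
def ThatHom (T : ∀ s, Us s →+ Us s) : UPQ F Us →+ UPQ F Us :=
  QuotientAddGroup.map _ _ (TpiHom T) (TpiHom_le F T)

theorem ThatHom_mk (T : ∀ s, Us s →+ Us s) (x : ∀ s, Us s) :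
    ThatHom F T (QuotientAddGroup.mk x)
      = QuotientAddGroup.mk (s := eventuallyZero F Us) (fun s => T s (x s)) := rfl

theorem ThatHom_endH (es : ∀ s, Us s) (hes : ∀ s, es s ≠ 0)
    (T : ∀ s, Us s →+ Us s) (hT : ∀ s, (Ms s).InCentroid (T s)) :
    (MhatData F Ms).IsEndH (ThatHom F T) := by
  intro g hg
  refine (Subgroup.closure_induction
    (p := fun g _ => g none = none ∧
      ∀ q : UPQ F Us, ThatHom F T (pval g q) = pval g (ThatHom F T q))
    ?_ ?_ ?_ ?_ hg).2
  · rintro g ⟨a', b', ha', hb', rfl⟩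
    constructor
    · rw [Equiv.Perm.mul_apply, (MhatData F Ms).mu_apply_none ha',
        (MhatData F Ms).mu_apply_zero hb']
    · intro q
      obtain ⟨x, rfl⟩ := QuotientAddGroup.mk_surjective q
      obtain ⟨a, hane, haeq⟩ := patch_rep F es hes ha'
      obtain ⟨b, hbne, hbeq⟩ := patch_rep F es hes hb'
      rw [← haeq, ← hbeq, MhatData_mu, MhatData_mu, ← Phi_mul, pval_Phi, ThatHom_mk,
        ThatHom_mk, pval_Phi]
      exact congrArg _ (funext fun s => (hT s).1 _
        (Subgroup.subset_closure ⟨a s, b s, hane s, hbne s, rfl⟩) (x s))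
  · exact ⟨rfl, fun q => rfl⟩
  · rintro g h _ _ ⟨hg1, hg2⟩ ⟨hh1, hh2⟩
    refine ⟨by rw [Equiv.Perm.mul_apply, hh1, hg1], fun q => ?_⟩
    rw [pval_mul hh1, pval_mul hh1, hg2, hh2]
  · rintro g _ ⟨hg1, hg2⟩
    have hginv : g⁻¹ none = none := by rw [Equiv.Perm.inv_eq_iff_eq, hg1]
    refine ⟨hginv, fun q => ?_⟩
    have hval : pval g (pval g⁻¹ q) = q := by
      have h1 : g⁻¹ (some q) ≠ none :=
        fun hc => Option.some_ne_none q (g⁻¹.injective (hc.trans hginv.symm))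
      apply pval_eq
      rw [← some_pval h1]
      exact g.apply_symm_apply _
    have hval2 : ∀ u, pval g⁻¹ (pval g u) = u := by
      intro u
      have h1 : g (some u) ≠ none :=
        fun hc => Option.some_ne_none u (g.injective (hc.trans hg1.symm))
      apply pval_eq
      rw [← some_pval h1]
      exact g.symm_apply_apply _
    have hq := hg2 (pval g⁻¹ q)
    rw [hval] at hq
    rw [hq, hval2]

theorem ThatHom_centroid2 (es : ∀ s, Us s) (hes : ∀ s, es s ≠ 0)
    (T : ∀ s, Us s →+ Us s) (hT : ∀ s, (Ms s).InCentroid (T s)) :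
    ∀ q x : UPQ F Us, (MhatData F Ms).hua (ThatHom F T q) x
      = ThatHom F T (ThatHom F T ((MhatData F Ms).hua q x)) := by
  intro q x
  obtain ⟨xr, rfl⟩ := QuotientAddGroup.mk_surjective x
  by_cases hq0 : q = 0
  · subst hq0
    rw [map_zero, MSData.hua_zero, map_zero, map_zero]
  · obtain ⟨a, hane, rfl⟩ := patch_rep F es hes hq0
    have hRHS : ThatHom F T (ThatHom F T ((MhatData F Ms).hua
        (QuotientAddGroup.mk a) (QuotientAddGroup.mk xr)))
        = QuotientAddGroup.mk (fun s => (Ms s).hua (T s (a s)) (xr s)) := by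
      rw [MhatData_hua F Ms xr a hane, ThatHom_mk, ThatHom_mk]
      exact congrArg _ (funext fun s => ((hT s).2 (a s) (xr s)).symm)
    rw [hRHS, ThatHom_mk]
    by_cases hT0 : (QuotientAddGroup.mk (fun s => T s (a s)) : UPQ F Us) = 0
    · rw [hT0, MSData.hua_zero]
      refine ((up_mk_eq_zero F Us).2 ?_).symm
      refine Filter.mem_of_superset ((up_mk_eq_zero F Us).1 hT0) (fun s hs => ?_)
      simp only [Set.mem_setOf_eq] at hs ⊢
      rw [hs, MSData.hua_zero]
    · obtain ⟨c, hcne, hceq⟩ := patch_rep F es hes hT0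
      rw [← hceq, MhatData_hua F Ms xr c hcne]
      refine (up_mk_eq F Us).2 ?_
      have hsame : {s | c s = T s (a s)} ∈ F := (up_mk_eq F Us).1 hceq
      refine Filter.mem_of_superset hsame (fun s hs => ?_)
      simp only [Set.mem_setOf_eq] at hs ⊢
      rw [hs]

end Main

/-- ultraproducts of Moufang sets.  Given Moufang sets `𝕄(U_s,τ_s)` with
`τ_s = μ_{e_s}`, there is an induced structure `𝕄(U,τ)` on the ultraproduct
`U = ∏ U_s/𝓕` with `[(a_s)]τ = [(a_sτ_s)]` for representatives with all entries nonzero;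
its Hua maps are computed componentwise, it is a Moufang set, it is proper (resp. special)
iff the set of `s` where `𝕄(U_s,τ_s)` is proper (resp. special) belongs to `𝓕`, and the
endomorphism induced by a family of centroid elements lies in the centroid. -/
theorem statement_7 {S : Type*} [Nonempty S] (F : Ultrafilter S)
    (Us : S → Type*) [∀ s, AddGroup (Us s)]
    (Ms : ∀ s, MSData (Us s)) (es : ∀ s, Us s) (hes : ∀ s, es s ≠ 0)
    (hτs : ∀ s, (Ms s).τ = (Ms s).μ (es s))
    (hMS : ∀ s, (Ms s).IsMoufangSet) :
    ∃ Mhat : MSData ((∀ s, Us s) ⧸ eventuallyZero F Us),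
      -- τ is well defined by [(a_s)]τ := [(a_sτ_s)]
      (∀ a : ∀ s, Us s, (∀ s, a s ≠ 0) →
        Mhat.τ (some (QuotientAddGroup.mk a)) =
          some (QuotientAddGroup.mk (s := eventuallyZero F Us)
            (fun s => pval (Ms s).τ (a s)))) ∧
      -- (1) the Hua maps are computed componentwise ...
      (∀ x a : ∀ s, Us s, (∀ s, a s ≠ 0) →
        Mhat.hua (QuotientAddGroup.mk a) (QuotientAddGroup.mk x) =
          QuotientAddGroup.mk (s := eventuallyZero F Us)
            (fun s => (Ms s).hua (a s) (x s))) ∧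
      -- ... in particular 𝕄(U,τ) is a Moufang set
      Mhat.IsMoufangSet ∧
      -- (2) properness
      (Mhat.IsProper ↔ {s | (Ms s).IsProper} ∈ F) ∧
      -- (3) specialness
      (Mhat.IsSpecial ↔ {s | (Ms s).IsSpecial} ∈ F) ∧
      -- (4) centroids
      ((∀ s, (Ms s).IsSpecial) →
        ∀ T : ∀ s, Us s →+ Us s, (∀ s, (Ms s).InCentroid (T s)) →
          ∃ That : ((∀ s, Us s) ⧸ eventuallyZero F Us) →+
              ((∀ s, Us s) ⧸ eventuallyZero F Us),
            (∀ x : ∀ s, Us s, That (QuotientAddGroup.mk x) =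
                QuotientAddGroup.mk (s := eventuallyZero F Us) (fun s => T s (x s))) ∧
            Mhat.InCentroid That) := by
  refine ⟨MhatData F Ms, ?_, ?_, ?_, ?_, ?_, ?_⟩
  · exact fun a ha => MhatData_tau_some F Ms a ha
  · exact fun x a ha => MhatData_hua F Ms x a ha
  · exact MhatData_MS F Ms hMS
  · exact MhatData_proper_iff F Ms es hes hτs
  · exact MhatData_special_iff F Ms es hes
  · intro _ T hT
    exact ⟨ThatHom F T, fun x => ThatHom_mk F T x,
      ThatHom_endH F Ms es hes T hT, ThatHom_centroid2 F Ms es hes T hT⟩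

end MoufangPaper
end

section
/- Let 𝕜̃ be a field with a valuation v : 𝕜̃ → ℝ ∪ {∞} (v(a) = ∞ iff a = 0, v(ab) = v(a)+v(b), v(a+b) ≥ min{v(a),v(b)}), let 𝒪 := {x ∈ 𝕜̃ : v(x) ≥ 0} be its valuation ring, and let 𝕜 be a subfield of 𝕜̃ contained in 𝒪. Let V be a vector space over 𝕜̃ and Λ an 𝒪-submodule of V. Suppose v_1, …, v_n ∈ V and λ_1, …, λ_n ∈ 𝕜 are such that the λ_i are pairwise distinct and ∑_{j=1}^{n} λ_i^{j−1}·v_j ∈ Λ for each 1 ≤ i ≤ n. Then v_1, …, v_n ∈ Λ. -/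
/-- Lemma `Vandermonde`.  Let `𝕜̃` be a field with a valuation `v`,
`𝒪 = {x : v x ≥ 0}` its valuation ring, `𝕜` a subfield contained in `𝒪`, `V` a
`𝕜̃`-vector space and `Λ ⊆ V` an `𝒪`-submodule.  If `λ_1, …, λ_n ∈ 𝕜` are pairwise
distinct and `∑_j λ_i^{j-1} • v_j ∈ Λ` for all `i`, then all `v_j ∈ Λ`. -/
theorem statement_8 {K : Type*} [Field K] {V : Type*} [AddCommGroup V] [Module K V]
    (v : K → WithTop ℝ)
    (hv0 : ∀ a, v a = ⊤ ↔ a = 0)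
    (hvmul : ∀ a b, v (a * b) = v a + v b)
    (hvadd : ∀ a b, min (v a) (v b) ≤ v (a + b))
    (k : Subfield K) (hk : ∀ c ∈ k, 0 ≤ v c)
    (Λ : Set V) (hΛ0 : (0 : V) ∈ Λ)
    (hΛadd : ∀ a ∈ Λ, ∀ b ∈ Λ, a + b ∈ Λ)
    (hΛsmul : ∀ c : K, 0 ≤ v c → ∀ w ∈ Λ, c • w ∈ Λ)
    (n : ℕ) (vs : Fin n → V) (lam : Fin n → K)
    (hmem : ∀ i, lam i ∈ k) (hinj : Function.Injective lam)
    (hsum : ∀ i, (∑ j : Fin n, lam i ^ (j.val) • vs j) ∈ Λ) :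
    ∀ j, vs j ∈ Λ := by
  intro m
  -- work over the subfield k
  set l : Fin n → k := fun i => ⟨lam i, hmem i⟩ with hl
  have hlinj : Function.Injective l := by
    intro a b h
    exact hinj (congrArg Subtype.val h)
  have hdet : (Matrix.vandermonde l).det ≠ 0 := by
    rw [Matrix.det_vandermonde]
    apply Finset.prod_ne_zero_iff.mpr
    intro i _
    apply Finset.prod_ne_zero_iff.mpr
    intro j hj
    have : i ≠ j := by
      intro h; subst h; simp at hj
    exact sub_ne_zero.mpr (fun h => this (hlinj h.symm))
  set N := (Matrix.vandermonde l)⁻¹ with hN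
  have hNl : N * Matrix.vandermonde l = 1 :=
    Matrix.nonsing_inv_mul _ (isUnit_iff_ne_zero.mpr hdet)
  have key : ∀ j : Fin n, ∑ i, ((N m i : K) * lam i ^ j.val) =
      if m = j then 1 else 0 := by
    intro j
    have h1 : (N * Matrix.vandermonde l) m j = (1 : Matrix (Fin n) (Fin n) k) m j := by
      rw [hNl]
    rw [Matrix.mul_apply, Matrix.one_apply] at h1
    have h2 := congrArg (Subtype.val) h1
    simpa [Matrix.vandermonde_apply, hl, apply_ite (Subtype.val)] using h2
  have hrep : vs m = ∑ i, (N m i : K) • (∑ j, lam i ^ j.val • vs j) := by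
    simp only [Finset.smul_sum, smul_smul]
    rw [Finset.sum_comm]
    have : ∀ j : Fin n, ∑ i, ((N m i : K) * lam i ^ j.val) • vs j =
        (if m = j then (1:K) else 0) • vs j := by
      intro j
      rw [← Finset.sum_smul, key j]
    rw [Finset.sum_congr rfl (fun j _ => this j)]
    simp
  rw [hrep]
  have : ∀ s : Finset (Fin n), (∑ i ∈ s, (N m i : K) • (∑ j, lam i ^ j.val • vs j)) ∈ Λ := by
    intro s
    induction s using Finset.induction with
    | empty => simpa using hΛ0
    | insert _ _ hx ih =>
      rw [Finset.sum_insert hx]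
      exact hΛadd _ (hΛsmul _ (hk _ (N m _).2) _ (hsum _)) _ ih
  exact this Finset.univ
end

section
/- Let G be a 2-sharp permutation group on a set X (i.e. any element of G fixing two distinct points of X is the identity) and let A be an abelian regular subgroup of G (A acts simply transitively on X). Suppose there are x ∈ X and h_1, h_2, h_3 ∈ H := N_G(A) ∩ G_x such that a^{h_3} = a^{h_1}·a^{h_2} for all a ∈ A (conjugation a^h := h^{-1}ah, the products taken in A, which is possible since h_1,h_2,h_3 normalize A). Then the center Z(G_x) of the stabilizer G_x is contained in H; in particular Z(G_x) normalizes A. -/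
/-- Lemma `1+2=3`.  Let `G ≤ Sym(X)` be a 2-sharp permutation group,
`A ≤ G` an abelian regular subgroup, and suppose there are `x ∈ X` and
`h₁, h₂, h₃ ∈ H := N_G(A) ∩ G_x` with `a^{h₃} = a^{h₁}·a^{h₂}` for all `a ∈ A`.
Then `Z(G_x) ≤ H`; in particular every element of `Z(G_x)` normalises `A`. -/
theorem statement_18 {X : Type*} (G : Subgroup (Equiv.Perm X))
    (h2sharp : ∀ g ∈ G, ∀ x y : X, x ≠ y → g x = x → g y = y → g = 1)
    (A : Subgroup (Equiv.Perm X)) (hAG : A ≤ G)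
    (hAcomm : ∀ a ∈ A, ∀ b ∈ A, a * b = b * a)
    (hAreg : ∀ x y : X, ∃! a : A, (a : Equiv.Perm X) x = y)
    (x : X) (h₁ h₂ h₃ : Equiv.Perm X)
    (hh₁ : h₁ ∈ G) (hh₂ : h₂ ∈ G) (hh₃ : h₃ ∈ G)
    (hx₁ : h₁ x = x) (hx₂ : h₂ x = x) (hx₃ : h₃ x = x)
    (hn₁ : ∀ a ∈ A, h₁⁻¹ * a * h₁ ∈ A) (hn₂ : ∀ a ∈ A, h₂⁻¹ * a * h₂ ∈ A)
    (hn₃ : ∀ a ∈ A, h₃⁻¹ * a * h₃ ∈ A)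
    (hrel : ∀ a ∈ A, h₃⁻¹ * a * h₃ = (h₁⁻¹ * a * h₁) * (h₂⁻¹ * a * h₂)) :
    ∀ z ∈ G, z x = x → (∀ g ∈ G, g x = x → z * g = g * z) →
      ∀ a ∈ A, z⁻¹ * a * z ∈ A := by
  intro z hzG hzx hzc a haA
  -- uniqueness principle: two elements of A agreeing at a point are equal
  have uniqA : ∀ p q : Equiv.Perm X, p ∈ A → q ∈ A → ∀ u : X, p u = q u → p = q := by
    intro p q hp hq u hpq
    obtain ⟨d, _, hdu⟩ := hAreg u (p u)
    have e1 : (⟨p, hp⟩ : A) = d := hdu ⟨p, hp⟩ rfl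
    have e2 : (⟨q, hq⟩ : A) = d := hdu ⟨q, hq⟩ hpq.symm
    exact congrArg Subtype.val (e1.trans e2.symm)
  by_cases ha1 : a = 1
  · subst ha1; simpa using A.one_mem
  have hax : a x ≠ x := by
    intro h
    exact ha1 (uniqA a 1 haA A.one_mem x (by simpa using h))
  -- commutation of z with the hᵢ, and of z⁻¹ with the hᵢ⁻¹
  have hic : ∀ h : Equiv.Perm X, z * h = h * z →
      ∀ u : X, z⁻¹ (h⁻¹ u) = h⁻¹ (z⁻¹ u) := by
    intro h hcomm u
    have : z⁻¹ * h⁻¹ = h⁻¹ * z⁻¹ := by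
      rw [← mul_inv_rev, ← mul_inv_rev, hcomm]
    rw [← Equiv.Perm.mul_apply, ← Equiv.Perm.mul_apply, this]
  have hs₁ := hic h₁ (hzc h₁ hh₁ hx₁)
  have hs₂ := hic h₂ (hzc h₂ hh₂ hx₂)
  have hs₃ := hic h₃ (hzc h₃ hh₃ hx₃)
  have hzix : z⁻¹ x = x := by
    conv_lhs => rw [← hzx]
    exact Equiv.symm_apply_apply z x
  -- pick the candidate a' ∈ A and auxiliary elements c, c' ∈ A
  obtain ⟨a', ha'x, -⟩ := hAreg x (z⁻¹ (a x))
  obtain ⟨c, hcx, -⟩ := hAreg x (h₁ (a x))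
  obtain ⟨c', hc'x, -⟩ := hAreg x (z⁻¹ (h₁ (a x)))
  have hcA : (c : Equiv.Perm X) ∈ A := c.2
  have hc'A : (c' : Equiv.Perm X) ∈ A := c'.2
  -- h₁⁻¹ c h₁ = a
  have hca : h₁⁻¹ * (c : Equiv.Perm X) * h₁ = a := by
    refine uniqA _ _ (hn₁ c hcA) haA x ?_
    simp [Equiv.Perm.mul_apply, hx₁, hcx]
  -- h₁⁻¹ c' h₁ = a'
  have hc'a' : h₁⁻¹ * (c' : Equiv.Perm X) * h₁ = (a' : Equiv.Perm X) := by
    refine uniqA _ _ (hn₁ c' hc'A) a'.2 x ?_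
    simp only [Equiv.Perm.mul_apply, hx₁, hc'x, ha'x]
    rw [← hs₁]
    simp
  -- the element g fixing two points
  set y : X := z⁻¹ (h₂⁻¹ (h₁ (a x))) with hy
  have hxy : x ≠ y := by
    intro h
    apply hax
    have h2 : h₂⁻¹ (h₁ (a x)) = x := by
      have := congrArg z h.symm
      rwa [hy, (show ∀ u, z (z⁻¹ u) = u from fun u => Equiv.apply_symm_apply z u), hzx] at this
    have h3 : h₁ (a x) = x := by
      have := congrArg h₂ h2
      rwa [(show ∀ u, h₂ (h₂⁻¹ u) = u from fun u => Equiv.apply_symm_apply h₂ u), hx₂] at this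
    have h4 := congrArg (⇑h₁⁻¹) h3
    rw [(show ∀ u, h₁⁻¹ (h₁ u) = u from fun u => Equiv.symm_apply_apply h₁ u)] at h4
    have h5 : h₁⁻¹ x = x := by
      nth_rewrite 1 [← hx₁]
      exact Equiv.symm_apply_apply h₁ x
    rw [h4, h5]
  set g : Equiv.Perm X := (a' : Equiv.Perm X)⁻¹ * z⁻¹ * a * z with hg
  have hgG : g ∈ G := by
    exact mul_mem (mul_mem (mul_mem (G.inv_mem (hAG a'.2)) (G.inv_mem hzG)) (hAG haA)) hzG
  have hgx : g x = x := by
    simp only [hg, Equiv.Perm.mul_apply, hzx, ← ha'x]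
    exact Equiv.symm_apply_apply (a' : Equiv.Perm X) _
  have hgy : g y = y := by
    -- key computation: both z⁻¹ (a (z y)) and a' y equal h₃⁻¹ (z⁻¹ (h₁ (a x)))
    have hzy : z y = h₂⁻¹ (h₁ (a x)) := by rw [hy]; exact Equiv.apply_symm_apply z _
    -- LHS part : a (h₂⁻¹ (h₁ (a x))) = h₃⁻¹ (h₁ (a x))
    have hL : a (h₂⁻¹ (h₁ (a x))) = h₃⁻¹ (h₁ (a x)) := by
      have e1 : h₂⁻¹ (h₁ (a x)) = (h₂⁻¹ * (c : Equiv.Perm X) * h₂) x := by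
        simp [Equiv.Perm.mul_apply, hx₂, hcx]
      rw [e1, ← Equiv.Perm.mul_apply]
      conv_lhs => rw [← hca]
      rw [← hrel (c : Equiv.Perm X) hcA]
      simp [Equiv.Perm.mul_apply, hx₃, hcx]
    -- RHS part : a' (h₂⁻¹ (z⁻¹ (h₁ (a x)))) = h₃⁻¹ (z⁻¹ (h₁ (a x)))
    have hR : (a' : Equiv.Perm X) (h₂⁻¹ (z⁻¹ (h₁ (a x)))) = h₃⁻¹ (z⁻¹ (h₁ (a x))) := by
      have e1 : h₂⁻¹ (z⁻¹ (h₁ (a x))) = (h₂⁻¹ * (c' : Equiv.Perm X) * h₂) x := by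
        simp [Equiv.Perm.mul_apply, hx₂, hc'x]
      rw [e1, ← Equiv.Perm.mul_apply]
      conv_lhs => rw [← hc'a']
      rw [← hrel (c' : Equiv.Perm X) hc'A]
      simp [Equiv.Perm.mul_apply, hx₃, hc'x]
    calc g y = (a' : Equiv.Perm X)⁻¹ (z⁻¹ (a (z y))) := by
              simp [hg, Equiv.Perm.mul_apply]
      _ = (a' : Equiv.Perm X)⁻¹ (h₃⁻¹ (z⁻¹ (h₁ (a x)))) := by
              rw [hzy, hL, hs₃]
      _ = (a' : Equiv.Perm X)⁻¹ ((a' : Equiv.Perm X) y) := by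
              rw [← hR, hy, hs₂]
      _ = y := Equiv.symm_apply_apply (a' : Equiv.Perm X) _
  have hg1 : g = 1 := h2sharp g hgG x y hxy hgx hgy
  have : z⁻¹ * a * z = (a' : Equiv.Perm X) := by
    have h' : (a' : Equiv.Perm X)⁻¹ * (z⁻¹ * a * z) = 1 := by
      rw [← hg1, hg]; group
    calc z⁻¹ * a * z = (a' : Equiv.Perm X) * ((a' : Equiv.Perm X)⁻¹ * (z⁻¹ * a * z)) := by
          group
      _ = (a' : Equiv.Perm X) := by rw [h']; group
  rw [this]; exact a'.2
end
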